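/- Let X → Y → X̃ be a Markov chain of discrete random variables with X, X̃ taking values in a finite set 𝒳, and let 𝒳' ⊆ 𝒳 be the support of X. Let 𝒜ₓ ⊆ 𝒳 be symmetric approximation sets containing x as before, and let p_e = Pr[X̃ ∉ 𝒜_X]. Then p_e·log|𝒳'| + (1−p_e)·sup_{x∈𝒳} log|𝒜ₓ ∩ 𝒳'| + H(p_e) ≥ H(X | Y). -/

import Mathlib

open Finset

-- Probability of an event under a finite probability mass function.
open Classical in
noncomputable def prob {Ω : Type*} [Fintype Ω] (μ : Ω → ℝ) (E : Set Ω) : ℝ :=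
  ∑ ω, if ω ∈ E then μ ω else 0

-- Shannon entropy (base 2) of a random variable `X` on a finite probability space.
noncomputable def entropy {Ω α : Type*} [Fintype Ω] (μ : Ω → ℝ) (X : Ω → α) : ℝ :=
  -∑ ω, μ ω * Real.logb 2 (prob μ {ω' | X ω' = X ω})

-- Conditional entropy `H(X | Y) = H(X,Y) − H(Y)`.
noncomputable def condEntropy {Ω α β : Type*} [Fintype Ω] (μ : Ω → ℝ)
    (X : Ω → α) (Y : Ω → β) : ℝ :=
  entropy μ (fun ω => (X ω, Y ω)) - entropy μ Y

-- Binary entropy function (base 2).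
noncomputable def binEnt (x : ℝ) : ℝ :=
  -(x * Real.logb 2 x) - (1 - x) * Real.logb 2 (1 - x)


--  **Generalized Fano inequality, support version.**  As in the generalized Fano
-- inequality, but with `𝒳` replaced by the support `𝒳'` of `X` and the approximation
-- sets intersected with the support:
-- `p_e·log|𝒳'| + (1−p_e)·sup_x log|𝒜 x ∩ 𝒳'| + H(p_e) ≥ H(X|Y)`. 

section AuxProb
variable {Ω : Type*} [Fintype Ω] {μ : Ω → ℝ}

open Classical in
lemma prob_congr (E F : Set Ω) (h : ∀ ω, ω ∈ E ↔ ω ∈ F) : prob μ E = prob μ F := by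
  unfold prob; exact Finset.sum_congr rfl fun ω _ => by simp [h ω]

lemma prob_nonneg (hμ0 : ∀ ω, 0 ≤ μ ω) (E : Set Ω) : 0 ≤ prob μ E := by
  classical
  unfold prob
  exact Finset.sum_nonneg fun ω _ => by split <;> simp [hμ0 ω]

lemma prob_mono (hμ0 : ∀ ω, 0 ≤ μ ω) {E F : Set Ω} (h : ∀ ω, ω ∈ E → ω ∈ F) :
    prob μ E ≤ prob μ F := by
  classical
  unfold prob
  refine Finset.sum_le_sum fun ω _ => ?_
  by_cases hE : ω ∈ E
  · simp [hE, h ω hE]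
  · simp [hE]; split <;> simp [hμ0 ω]

lemma single_le_prob (hμ0 : ∀ ω, 0 ≤ μ ω) {E : Set Ω} {ω : Ω} (h : ω ∈ E) :
    μ ω ≤ prob μ E := by
  classical
  unfold prob
  have := Finset.single_le_sum (f := fun ω' => if ω' ∈ E then μ ω' else 0)
    (fun ω' _ => by split <;> simp [hμ0 ω']) (Finset.mem_univ ω)
  simpa [h] using this

lemma prob_le_one (hμ0 : ∀ ω, 0 ≤ μ ω) (hμ1 : ∑ ω, μ ω = 1) (E : Set Ω) :
    prob μ E ≤ 1 := by
  classical
  rw [← hμ1]; unfold prob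
  exact Finset.sum_le_sum fun ω _ => by split <;> simp [hμ0 ω]

open Classical in
lemma prob_eq_sum_filter (E : Set Ω) (p : Ω → Prop) (hp : ∀ ω, ω ∈ E ↔ p ω) :
    prob μ E = ∑ ω ∈ Finset.univ.filter p, μ ω := by
  unfold prob
  rw [Finset.sum_filter]
  exact Finset.sum_congr rfl fun ω _ => by simp [hp ω]

end AuxProb

open Classical in
theorem generalized_fano_support
    {Ω 𝒳 β : Type*} [Fintype Ω] [Fintype 𝒳] [Nonempty 𝒳]
    (μ : Ω → ℝ) (hμ0 : ∀ ω, 0 ≤ μ ω) (hμ1 : ∑ ω, μ ω = 1)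
    (X : Ω → 𝒳) (Y : Ω → β) (Xt : Ω → 𝒳)
    (hMarkov : ∀ (x : 𝒳) (y : β) (z : 𝒳),
      prob μ {ω | X ω = x ∧ Y ω = y ∧ Xt ω = z} * prob μ {ω | Y ω = y}
        = prob μ {ω | X ω = x ∧ Y ω = y} * prob μ {ω | Y ω = y ∧ Xt ω = z})
    (𝒜 : 𝒳 → Finset 𝒳) (hmem : ∀ x, x ∈ 𝒜 x)
    (hsym : ∀ x x', x' ∈ 𝒜 x ↔ x ∈ 𝒜 x')
    (pe : ℝ) (hpe : pe = prob μ {ω | Xt ω ∉ 𝒜 (X ω)}) :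
    condEntropy μ X Y ≤
      pe * Real.logb 2
          ((Finset.univ.filter (fun x : 𝒳 => 0 < prob μ {ω | X ω = x})).card)
        + (1 - pe) * (⨆ x : 𝒳, Real.logb 2
            ((𝒜 x ∩ Finset.univ.filter (fun x' : 𝒳 => 0 < prob μ {ω | X ω = x'})).card))
        + binEnt pe := by
  classical
  set X' : Finset 𝒳 := Finset.univ.filter (fun x : 𝒳 => 0 < prob μ {ω | X ω = x}) with hX'
  set L : ℝ := ⨆ x : 𝒳, Real.logb 2 ((𝒜 x ∩ X').card) with hL
  set N : ℕ := X'.card with hN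
  set n : 𝒳 → ℕ := fun z => (𝒜 z ∩ X').card with hn
  set r : 𝒳 → 𝒳 → ℝ := fun x z =>
    if x ∈ X' then (if x ∈ 𝒜 z then (1 - pe) / (n z) else pe / N) else 0 with hr
  set c : 𝒳 → 𝒳 → ℝ := fun x z => -Real.logb 2 (r x z) with hc
  -- basic facts
  have hpe0 : 0 ≤ pe := hpe ▸ prob_nonneg hμ0 _
  have hpe1 : pe ≤ 1 := hpe ▸ prob_le_one hμ0 hμ1 _
  have hL0 : 0 ≤ L := by
    refine le_trans ?_ (le_ciSup (Finite.bddAbove_range _) (Classical.arbitrary 𝒳))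
    rcases Nat.eq_zero_or_pos ((𝒜 (Classical.arbitrary 𝒳) ∩ X').card) with h | h
    · simp [h]
    · exact Real.logb_nonneg one_lt_two (by exact_mod_cast h)
  -- membership in support for positive-mass points
  have hsupp : ∀ ω, 0 < μ ω → X ω ∈ X' := by
    intro ω h
    rw [hX', Finset.mem_filter]
    exact ⟨Finset.mem_univ _, lt_of_lt_of_le h (single_le_prob hμ0 rfl)⟩
  have hsumE : ∑ ω ∈ Finset.univ.filter (fun ω => Xt ω ∉ 𝒜 (X ω)), μ ω = pe := by
    rw [hpe]
    exact ((prob_eq_sum_filter (μ := μ) {ω | Xt ω ∉ 𝒜 (X ω)}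
      (fun ω => Xt ω ∉ 𝒜 (X ω)) (fun ω => Iff.rfl)).trans (by congr!)).symm
  have hsumEc : ∑ ω ∈ Finset.univ.filter (fun ω => ¬ Xt ω ∉ 𝒜 (X ω)), μ ω = 1 - pe := by
    have := Finset.sum_filter_add_sum_filter_not Finset.univ
      (fun ω => Xt ω ∉ 𝒜 (X ω)) μ
    rw [hsumE, hμ1] at this
    linarith
  have hcompl : prob μ {ω | Xt ω ∈ 𝒜 (X ω)} = 1 - pe := by
    rw [← hsumEc]
    exact (prob_eq_sum_filter (μ := μ) {ω | Xt ω ∈ 𝒜 (X ω)}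
      (fun ω => ¬ Xt ω ∉ 𝒜 (X ω)) (fun ω => (not_not).symm)).trans (by congr!)
  have hA : condEntropy μ X Y ≤ ∑ ω, μ ω * c (X ω) (Xt ω) := by
    set g : Ω → 𝒳 × β × 𝒳 := fun ω => (X ω, Y ω, Xt ω) with hg
    set T : Finset (𝒳 × β × 𝒳) := Finset.univ.image g with hT
    set P : 𝒳 × β × 𝒳 → ℝ :=
      fun t => prob μ {ω | X ω = t.1 ∧ Y ω = t.2.1 ∧ Xt ω = t.2.2} with hP
    set pY : β → ℝ := fun y => prob μ {ω | Y ω = y} with hpY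
    set pXY : 𝒳 → β → ℝ := fun x y => prob μ {ω | X ω = x ∧ Y ω = y} with hpXY
    set pYZ : β → 𝒳 → ℝ := fun y z => prob μ {ω | Y ω = y ∧ Xt ω = z} with hpYZ
    set f : 𝒳 × β × 𝒳 → ℝ := fun t => Real.logb 2 (pY t.2.1)
      - Real.logb 2 (pXY t.1 t.2.1) + Real.logb 2 (r t.1 t.2.2) with hf
    have fiber_eq : ∀ t : 𝒳 × β × 𝒳,
        ∑ ω ∈ Finset.univ.filter (fun ω => g ω = t), μ ω = P t := by
      intro t
      rw [hP]
      refine ((prob_eq_sum_filter (μ := μ) _ (fun ω => g ω = t)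
        (fun ω => ?_)).trans (by congr!)).symm
      simp [hg, Prod.ext_iff, and_assoc]
    have hmaps : ∀ ω ∈ Finset.univ (α := Ω), g ω ∈ T :=
      fun ω _ => Finset.mem_image_of_mem g (Finset.mem_univ ω)
    have key1 : ∑ ω, μ ω * f (g ω) = ∑ t ∈ T, P t * f t := by
      rw [← Finset.sum_fiberwise_of_maps_to hmaps (fun ω => μ ω * f (g ω))]
      refine Finset.sum_congr rfl fun t ht => ?_
      rw [← fiber_eq t, Finset.sum_mul]
      refine Finset.sum_congr rfl fun ω hω => ?_
      rw [(Finset.mem_filter.mp hω).2]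
    have hT1 : ∑ t ∈ T, P t = 1 := by
      rw [← hμ1, ← Finset.sum_fiberwise_of_maps_to hmaps μ]
      exact Finset.sum_congr rfl fun t ht => (fiber_eq t).symm
    have hr_nonneg : ∀ x z, 0 ≤ r x z := by
      intro x z
      rw [hr]
      dsimp only
      split
      · split
        · exact div_nonneg (by linarith) (Nat.cast_nonneg _)
        · exact div_nonneg hpe0 (Nat.cast_nonneg _)
      · exact le_rfl
    have hterm : ∀ t : 𝒳 × β × 𝒳, P t * f t ≤
        ((if 0 < P t then pYZ t.2.1 t.2.2 * r t.1 t.2.2 else 0) - P t) / Real.log 2 := by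
      rintro ⟨x, yy, z⟩
      have hP0 : (0:ℝ) ≤ P (x, yy, z) := by
        rw [hP]; exact prob_nonneg hμ0 _
      rcases eq_or_lt_of_le hP0 with h0 | h0
      · simp [← h0]
      have hb : 0 < pXY x yy := by
        refine lt_of_lt_of_le h0 ?_
        rw [hP, hpXY]
        exact prob_mono hμ0 fun ω h => ⟨h.1, h.2.1⟩
      have ha : 0 < pY yy := by
        refine lt_of_lt_of_le hb ?_
        rw [hpY, hpXY]
        exact prob_mono hμ0 fun ω h => h.2
      have hxX' : x ∈ X' := by
        rw [hX', Finset.mem_filter]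
        refine ⟨Finset.mem_univ _, lt_of_lt_of_le h0 ?_⟩
        rw [hP]
        exact prob_mono hμ0 fun ω h => h.1
      have hPxz : P (x, yy, z) ≤ prob μ {ω | X ω = x ∧ Xt ω = z} := by
        rw [hP]
        exact prob_mono hμ0 fun ω h => ⟨h.1, h.2.2⟩
      have hrpos : 0 < r x z := by
        rw [hr]
        dsimp only
        rw [if_pos hxX']
        by_cases hxz : x ∈ 𝒜 z
        · rw [if_pos hxz]
        -- 0 < (1 - pe) / n z
          have hn1 : 0 < n z := Finset.card_pos.mpr ⟨x, Finset.mem_inter.mpr ⟨hxz, hxX'⟩⟩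
          have h1pe : 0 < 1 - pe := by
            rw [← hcompl]
            refine lt_of_lt_of_le (lt_of_lt_of_le h0 hPxz) (prob_mono hμ0 ?_)
            rintro ω ⟨h1, h2⟩
            show Xt ω ∈ 𝒜 (X ω)
            rw [h1, h2]
            exact (hsym x z).mpr hxz
          exact div_pos h1pe (by exact_mod_cast hn1)
        · rw [if_neg hxz]
          have hN1 : 0 < N := Finset.card_pos.mpr ⟨x, hxX'⟩
          have hpep : 0 < pe := by
            rw [hpe]
            refine lt_of_lt_of_le (lt_of_lt_of_le h0 hPxz) (prob_mono hμ0 ?_)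
            rintro ω ⟨h1, h2⟩
            show Xt ω ∉ 𝒜 (X ω)
            rw [h1, h2]
            exact fun h => hxz ((hsym x z).mp h)
          exact div_pos hpep (by exact_mod_cast hN1)
      have hMa : P (x, yy, z) * pY yy = pXY x yy * pYZ yy z := by
        rw [hP, hpY, hpXY, hpYZ]
        exact hMarkov x yy z
      rw [if_pos h0]
      have hfeq : f (x, yy, z) = Real.logb 2 (pY yy * r x z / pXY x yy) := by
        rw [hf]
        dsimp only
        rw [Real.logb_div (mul_ne_zero (ne_of_gt ha) (ne_of_gt hrpos)) (ne_of_gt hb),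
          Real.logb_mul (ne_of_gt ha) (ne_of_gt hrpos)]
        ring
      have hlog : Real.logb 2 (pY yy * r x z / pXY x yy)
          ≤ (pY yy * r x z / pXY x yy - 1) / Real.log 2 := by
        rw [Real.logb]
        exact div_le_div_of_nonneg_right
          (Real.log_le_sub_one_of_pos (by positivity)) (Real.log_pos one_lt_two).le
      have hprod : P (x, yy, z) * (pY yy * r x z / pXY x yy) = pYZ yy z * r x z := by
        field_simp
        linear_combination hMa
      calc P (x, yy, z) * f (x, yy, z)
          ≤ P (x, yy, z) * ((pY yy * r x z / pXY x yy - 1) / Real.log 2) := by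
            rw [hfeq]
            exact mul_le_mul_of_nonneg_left hlog (le_of_lt h0)
        _ = (pYZ yy z * r x z - P (x, yy, z)) / Real.log 2 := by
            rw [← hprod]; ring
    have hrsum : ∀ z, ∑ x, r x z ≤ 1 := by
      intro z
      have e0 : ∑ x, r x z
          = ∑ x ∈ X', (if x ∈ 𝒜 z then (1 - pe) / (n z : ℝ) else pe / (N : ℝ)) := by
        rw [hr]
        dsimp only
        rw [Finset.sum_ite_mem, Finset.univ_inter]
      rw [e0, Finset.sum_ite, Finset.sum_const, Finset.sum_const,
        nsmul_eq_mul, nsmul_eq_mul]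
      have hc1 : (X'.filter (fun x => x ∈ 𝒜 z)).card = n z := by
        rw [hn, Finset.filter_mem_eq_inter, Finset.inter_comm]
      have hc2 : (X'.filter (fun x => ¬ x ∈ 𝒜 z)).card ≤ N := by
        rw [hN]
        exact Finset.card_le_card (Finset.filter_subset _ _)
      have hb1 : ((X'.filter (fun x => x ∈ 𝒜 z)).card : ℝ) * ((1 - pe) / (n z : ℝ))
          ≤ 1 - pe := by
        rw [hc1]
        rcases Nat.eq_zero_or_pos (n z) with h | h
        · rw [h]
          simp
          linarith
        · have hnz : ((n z : ℝ)) ≠ 0 := by exact_mod_cast h.ne'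
          rw [mul_comm, div_mul_cancel₀ _ hnz]
      have hb2 : ((X'.filter (fun x => ¬ x ∈ 𝒜 z)).card : ℝ) * (pe / (N : ℝ)) ≤ pe := by
        rcases Nat.eq_zero_or_pos N with h | h
        · have : (X'.filter (fun x => ¬ x ∈ 𝒜 z)).card = 0 := Nat.le_zero.mp (h ▸ hc2)
          rw [this]
          simp [hpe0]
        · have hNz : ((N : ℝ)) ≠ 0 := by exact_mod_cast h.ne'
          calc ((X'.filter (fun x => ¬ x ∈ 𝒜 z)).card : ℝ) * (pe / (N : ℝ))
              ≤ (N : ℝ) * (pe / (N : ℝ)) := by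
                refine mul_le_mul_of_nonneg_right ?_ (div_nonneg hpe0 (Nat.cast_nonneg _))
                exact_mod_cast hc2
            _ = pe := by rw [mul_comm, div_mul_cancel₀ _ hNz]
      linarith
    have hpYZsum : ∀ z, ∑ y ∈ Finset.univ.image Y, pYZ y z = prob μ {ω | Xt ω = z} := by
      intro z
      rw [hpYZ]
      unfold prob
      rw [Finset.sum_comm]
      refine Finset.sum_congr rfl fun ω _ => ?_
      rw [Finset.sum_eq_single (Y ω)]
      · simp [Set.mem_setOf_eq]
      · intro b _ hb
        rw [if_neg]
        simp only [Set.mem_setOf_eq]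
        exact fun h => hb h.1.symm
      · exact fun h => absurd (Finset.mem_image_of_mem Y (Finset.mem_univ ω)) h
    have hpZsum : ∑ z, prob μ {ω | Xt ω = z} = 1 := by
      unfold prob
      rw [Finset.sum_comm, ← hμ1]
      refine Finset.sum_congr rfl fun ω _ => ?_
      simp [Set.mem_setOf_eq]
    have hpYZ0 : ∀ y z, 0 ≤ pYZ y z := by
      intro y z
      rw [hpYZ]
      exact prob_nonneg hμ0 _
    have hsumQ : ∑ t ∈ T,
        (if 0 < P t then pYZ t.2.1 t.2.2 * r t.1 t.2.2 else 0) ≤ 1 := by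
      calc ∑ t ∈ T, (if 0 < P t then pYZ t.2.1 t.2.2 * r t.1 t.2.2 else 0)
          ≤ ∑ t ∈ T, pYZ t.2.1 t.2.2 * r t.1 t.2.2 := by
            refine Finset.sum_le_sum fun t _ => ?_
            split
            · exact le_rfl
            · exact mul_nonneg (hpYZ0 _ _) (hr_nonneg _ _)
        _ ≤ ∑ t ∈ Finset.univ ×ˢ ((Finset.univ.image Y) ×ˢ Finset.univ),
              pYZ t.2.1 t.2.2 * r t.1 t.2.2 := by
            refine Finset.sum_le_sum_of_subset_of_nonneg ?_
              (fun t _ _ => mul_nonneg (hpYZ0 _ _) (hr_nonneg _ _))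
            intro t ht
            rw [hT] at ht
            obtain ⟨ω, _, rfl⟩ := Finset.mem_image.mp ht
            rw [hg]
            exact Finset.mem_product.mpr ⟨Finset.mem_univ _, Finset.mem_product.mpr
              ⟨Finset.mem_image_of_mem Y (Finset.mem_univ ω), Finset.mem_univ _⟩⟩
        _ = ∑ x, ∑ y ∈ Finset.univ.image Y, ∑ z, pYZ y z * r x z := by
            rw [Finset.sum_product]
            refine Finset.sum_congr rfl fun x _ => ?_
            rw [Finset.sum_product]
        _ = ∑ y ∈ Finset.univ.image Y, ∑ z, pYZ y z * (∑ x, r x z) := by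
            rw [Finset.sum_comm]
            refine Finset.sum_congr rfl fun y _ => ?_
            rw [Finset.sum_comm]
            refine Finset.sum_congr rfl fun z _ => ?_
            rw [Finset.mul_sum]
        _ ≤ ∑ y ∈ Finset.univ.image Y, ∑ z, pYZ y z := by
            refine Finset.sum_le_sum fun y _ => Finset.sum_le_sum fun z _ => ?_
            exact mul_le_of_le_one_right (hpYZ0 _ _) (hrsum z)
        _ = ∑ z, ∑ y ∈ Finset.univ.image Y, pYZ y z := Finset.sum_comm
        _ = ∑ z, prob μ {ω | Xt ω = z} := Finset.sum_congr rfl fun z _ => hpYZsum z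
        _ = 1 := hpZsum
    -- assemble
    have hEnt : condEntropy μ X Y
        = ∑ ω, (μ ω * Real.logb 2 (pY (Y ω)) - μ ω * Real.logb 2 (pXY (X ω) (Y ω))) := by
      unfold condEntropy entropy
      rw [neg_sub_neg, ← Finset.sum_sub_distrib]
      refine Finset.sum_congr rfl fun ω _ => ?_
      have h2 : prob μ {ω' | (fun ω0 => (X ω0, Y ω0)) ω' = (fun ω0 => (X ω0, Y ω0)) ω}
          = prob μ {ω' | X ω' = X ω ∧ Y ω' = Y ω} :=
        prob_congr _ _ fun ω' => by simp [Prod.ext_iff]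
      rw [h2, hpY, hpXY]
    have hdiff : condEntropy μ X Y - ∑ ω, μ ω * c (X ω) (Xt ω) = ∑ ω, μ ω * f (g ω) := by
      rw [hEnt, ← Finset.sum_sub_distrib]
      refine Finset.sum_congr rfl fun ω _ => ?_
      simp only [hc, hf, hg]
      ring
    have hfin : ∑ ω, μ ω * f (g ω) ≤ 0 := by
      rw [key1]
      calc ∑ t ∈ T, P t * f t
          ≤ ∑ t ∈ T, ((if 0 < P t then pYZ t.2.1 t.2.2 * r t.1 t.2.2 else 0) - P t)
            / Real.log 2 := Finset.sum_le_sum fun t _ => hterm t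
        _ = ((∑ t ∈ T, (if 0 < P t then pYZ t.2.1 t.2.2 * r t.1 t.2.2 else 0)) - 1)
            / Real.log 2 := by
            rw [← Finset.sum_div, Finset.sum_sub_distrib, hT1]
        _ ≤ 0 := div_nonpos_of_nonpos_of_nonneg (by linarith)
            (le_of_lt (Real.log_pos one_lt_two))
    linarith
  have hB : ∑ ω, μ ω * c (X ω) (Xt ω) ≤
      pe * Real.logb 2 (N : ℝ) + (1 - pe) * L + binEnt pe := by
    rw [← Finset.sum_filter_add_sum_filter_not Finset.univ
      (fun ω => Xt ω ∉ 𝒜 (X ω)) (fun ω => μ ω * c (X ω) (Xt ω))]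
    have hErr : ∑ ω ∈ Finset.univ.filter (fun ω => Xt ω ∉ 𝒜 (X ω)),
        μ ω * c (X ω) (Xt ω) ≤
        ∑ ω ∈ Finset.univ.filter (fun ω => Xt ω ∉ 𝒜 (X ω)),
        μ ω * (Real.logb 2 (N : ℝ) - Real.logb 2 pe) := by
      refine Finset.sum_le_sum fun ω hω => ?_
      rcases eq_or_lt_of_le (hμ0 ω) with h0 | h0
      · simp [← h0]
      refine mul_le_mul_of_nonneg_left (le_of_eq ?_) (le_of_lt h0)
      have hx : X ω ∈ X' := hsupp ω h0
      have hnot : X ω ∉ 𝒜 (Xt ω) := fun h => (Finset.mem_filter.mp hω).2 ((hsym _ _).mp h)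
      have hpep : 0 < pe := by
        rw [hpe]
        exact lt_of_lt_of_le h0 (single_le_prob hμ0 (Finset.mem_filter.mp hω).2)
      have hN1 : 0 < N := Finset.card_pos.mpr ⟨X ω, hx⟩
      rw [hc, hr]
      simp only [hx, hnot, if_true, if_false]
      rw [Real.logb_div (ne_of_gt hpep) (by exact_mod_cast hN1.ne')]
      ring
    have hOk : ∑ ω ∈ Finset.univ.filter (fun ω => ¬ Xt ω ∉ 𝒜 (X ω)),
        μ ω * c (X ω) (Xt ω) ≤
        ∑ ω ∈ Finset.univ.filter (fun ω => ¬ Xt ω ∉ 𝒜 (X ω)),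
        μ ω * (L - Real.logb 2 (1 - pe)) := by
      refine Finset.sum_le_sum fun ω hω => ?_
      rcases eq_or_lt_of_le (hμ0 ω) with h0 | h0
      · simp [← h0]
      refine mul_le_mul_of_nonneg_left ?_ (le_of_lt h0)
      have hx : X ω ∈ X' := hsupp ω h0
      have hin : X ω ∈ 𝒜 (Xt ω) :=
        (hsym _ _).mp (not_not.mp (Finset.mem_filter.mp hω).2)
      have hn1 : 0 < n (Xt ω) := Finset.card_pos.mpr ⟨X ω, Finset.mem_inter.mpr ⟨hin, hx⟩⟩
      have hLlog : Real.logb 2 ((n (Xt ω) : ℝ)) ≤ L := by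
        rw [hL, hn]
        exact le_ciSup (Finite.bddAbove_range
          (fun x => Real.logb 2 (((𝒜 x ∩ X').card : ℝ)))) (Xt ω)
      rw [hc, hr]
      simp only [hx, hin, if_true]
      rcases eq_or_lt_of_le hpe1 with hpe1' | hpe1'
      · rw [← hpe1']
        norm_num
        linarith
      · rw [Real.logb_div (by linarith) (by exact_mod_cast hn1.ne')]
        have : -(Real.logb 2 (1 - pe) - Real.logb 2 ((n (Xt ω) : ℝ)))
            = Real.logb 2 ((n (Xt ω) : ℝ)) - Real.logb 2 (1 - pe) := by ring
        rw [this]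
        linarith
    have e1 : ∑ ω ∈ Finset.univ.filter (fun ω => Xt ω ∉ 𝒜 (X ω)),
        μ ω * (Real.logb 2 (N : ℝ) - Real.logb 2 pe)
        = pe * (Real.logb 2 (N : ℝ) - Real.logb 2 pe) := by
      rw [← Finset.sum_mul, hsumE]
    have e2 : ∑ ω ∈ Finset.univ.filter (fun ω => ¬ Xt ω ∉ 𝒜 (X ω)),
        μ ω * (L - Real.logb 2 (1 - pe))
        = (1 - pe) * (L - Real.logb 2 (1 - pe)) := by
      rw [← Finset.sum_mul, hsumEc]
    have := add_le_add hErr hOk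
    rw [e1, e2] at this
    refine le_trans this (le_of_eq ?_)
    unfold binEnt
    ring
  calc condEntropy μ X Y ≤ _ := hA
    _ ≤ _ := hB
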